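/- If (f,q) solves the one-dimensional Ginzburg-Landau system with f > 0 on [−a,a] and h₀ > 0, then q is strictly increasing on (−a,a) and has a unique zero a₀ in (−a,a); moreover q' is decreasing on (−a,a₀) and increasing on (a₀,a). -/

import Mathlib

theorem stmt_1 (a κ h₀ : ℝ) (ha : 0 < a) (hκ : 0 < κ) (hh₀ : 0 < h₀)
    (f q : ℝ → ℝ) (hf2 : ContDiff ℝ 2 f) (hq2 : ContDiff ℝ 2 q)
    (hfeq : ∀ x ∈ Set.Ioo (-a) a,
      (1 / κ ^ 2) * deriv (deriv f) x = f x * ((f x) ^ 2 + (q x) ^ 2 - 1))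
    (hqeq : ∀ x ∈ Set.Ioo (-a) a, deriv (deriv q) x = q x * (f x) ^ 2)
    (hbf1 : deriv f (-a) = 0) (hbf2 : deriv f a = 0)
    (hbq1 : deriv q (-a) = h₀) (hbq2 : deriv q a = h₀)
    (hfpos : ∀ x ∈ Set.Icc (-a) a, 0 < f x) :
    StrictMonoOn q (Set.Ioo (-a) a) ∧
    ∃! a₀, a₀ ∈ Set.Ioo (-a) a ∧ q a₀ = 0 ∧
      AntitoneOn (deriv q) (Set.Ioo (-a) a₀) ∧
      MonotoneOn (deriv q) (Set.Ioo a₀ a) := by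
  have hmem : -a < a := by linarith
  have hqd : Differentiable ℝ q := hq2.differentiable (by norm_num)
  have hq1 : ContDiff ℝ 1 (deriv q) := by
    have h := contDiff_succ_iff_deriv.mp (show ContDiff ℝ ((1:ℕ)+1) q from by exact_mod_cast hq2)
    exact_mod_cast h.2.2
  have hq'd : Differentiable ℝ (deriv q) := hq1.differentiable (by norm_num)
  have hq'c : Continuous (deriv q) := hq'd.continuous
  have hqc : Continuous q := hqd.continuous
  have hfc : Continuous f := hf2.continuous
  have hIoo : Set.Ioo (-a) a ⊆ Set.Icc (-a) a := Set.Ioo_subset_Icc_self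
  -- Step A: deriv q > 0 on Icc (-a) a
  have hA : ∀ x ∈ Set.Icc (-a) a, 0 < deriv q x := by
    by_contra hcon
    push_neg at hcon
    obtain ⟨x₀, hx₀, hx₀le⟩ := hcon
    obtain ⟨m, hmI, hmin⟩ := (isCompact_Icc).exists_isMinOn
      ⟨-a, Set.left_mem_Icc.2 hmem.le⟩ hq'c.continuousOn
    have hqm_le : deriv q m ≤ 0 := le_trans (hmin hx₀) hx₀le
    have hmo : m ∈ Set.Ioo (-a) a := by
      constructor
      · rcases hmI.1.lt_or_eq with h | h
        · exact h
        · exfalso; rw [← h, hbq1] at hqm_le; linarith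
      · rcases hmI.2.lt_or_eq with h | h
        · exact h
        · exfalso; rw [h, hbq2] at hqm_le; linarith
    have hloc : IsLocalMin (deriv q) m :=
      hmin.isLocalMin (Icc_mem_nhds hmo.1 hmo.2)
    have hd0 : deriv (deriv q) m = 0 := hloc.deriv_eq_zero
    have hqm0 : q m = 0 := by
      have h1 := hqeq m hmo
      rw [hd0] at h1
      have hfm := hfpos m hmI
      have : f m ^ 2 > 0 := by positivity
      nlinarith
    rcases hqm_le.lt_or_eq with hlt | heq
    · -- case deriv q m < 0
      have hev : ∀ᶠ x in nhds m, deriv q x < 0 :=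
        hq'c.continuousAt.eventually_lt continuousAt_const hlt
      obtain ⟨δ, hδpos, hδ⟩ := Metric.eventually_nhds_iff.mp hev
      set c : ℝ := min (m + δ/2) ((m + a)/2) with hc
      have hcm : m < c := lt_min (by linarith) (by linarith [hmo.2])
      have hca : c < a := lt_of_le_of_lt (min_le_right _ _) (by linarith [hmo.2])
      have hneg_on : ∀ x ∈ Set.Icc m c, deriv q x < 0 := by
        intro x hx
        apply hδ
        rw [Real.dist_eq, abs_of_nonneg (by linarith [hx.1])]
        have h2 : x ≤ m + δ/2 := le_trans hx.2 (min_le_left _ _)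
        linarith
      have qanti1 : StrictAntiOn q (Set.Icc m c) :=
        strictAntiOn_of_deriv_neg (convex_Icc _ _) hqc.continuousOn
          (fun x hx => by
            rw [interior_Icc] at hx
            exact hneg_on x (Set.Ioo_subset_Icc_self hx))
      have qneg1 : ∀ x ∈ Set.Ioc m c, q x < 0 := by
        intro x hx
        have := qanti1 ⟨le_refl m, hcm.le⟩ ⟨hx.1.le, hx.2⟩ hx.1
        rwa [hqm0] at this
      -- claim: q < 0 on (m, a]
      have hqnegall : ∀ x ∈ Set.Ioc m a, q x < 0 := by
        by_contra hcon2
        push_neg at hcon2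
        obtain ⟨y, hyI, hy0⟩ := hcon2
        set T : Set ℝ := {x ∈ Set.Icc c a | 0 ≤ q x} with hT
        have hTy : y ∈ T := by
          refine ⟨⟨?_, hyI.2⟩, hy0⟩
          by_contra hyc
          push_neg at hyc
          exact absurd hy0 (not_le.2 (qneg1 y ⟨hyI.1, hyc.le⟩))
        have hTclosed : IsClosed T :=
          (isClosed_Icc.inter (isClosed_Ici.preimage hqc))
        have hTbdd : BddBelow T := ⟨c, fun x hx => hx.1.1⟩
        have hzT : sInf T ∈ T := hTclosed.csInf_mem ⟨y, hTy⟩ hTbdd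
        set z : ℝ := sInf T with hz
        have hzc : c ≤ z := hzT.1.1
        have hza : z ≤ a := hzT.1.2
        have hzgtc : c < z := by
          rcases hzc.lt_or_eq with h | h
          · exact h
          · exfalso
            have := qneg1 c ⟨hcm, le_refl c⟩
            rw [h] at this
            exact absurd hzT.2 (not_le.2 this)
        have hmz : m < z := hcm.trans hzgtc
        have qneg_on : ∀ t ∈ Set.Ioo m z, q t < 0 := by
          intro t ht
          rcases le_or_gt t c with h | h
          · exact qneg1 t ⟨ht.1, h⟩
          · by_contra hq
            push_neg at hq
            have htT : t ∈ T := ⟨⟨h.le, ht.2.le.trans hza⟩, hq⟩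
            exact absurd (csInf_le hTbdd htT) (not_le.2 ht.2)
        have q''neg : ∀ t ∈ Set.Ioo m z, deriv (deriv q) t < 0 := by
          intro t ht
          have htI : t ∈ Set.Ioo (-a) a := ⟨hmo.1.trans ht.1, lt_of_lt_of_le ht.2 hza⟩
          rw [hqeq t htI]
          have hft := hfpos t (hIoo htI)
          exact mul_neg_of_neg_of_pos (qneg_on t ht) (by positivity)
        have q'anti : StrictAntiOn (deriv q) (Set.Icc m z) :=
          strictAntiOn_of_deriv_neg (convex_Icc _ _) hq'c.continuousOn
            (fun t ht => by rw [interior_Icc] at ht; exact q''neg t ht)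
        have q'neg : ∀ t ∈ Set.Ioo m z, deriv q t < 0 := by
          intro t ht
          have := q'anti ⟨le_refl m, hmz.le⟩ ⟨ht.1.le, ht.2.le⟩ ht.1
          linarith
        have qanti : StrictAntiOn q (Set.Icc m z) :=
          strictAntiOn_of_deriv_neg (convex_Icc _ _) hqc.continuousOn
            (fun t ht => by rw [interior_Icc] at ht; exact q'neg t ht)
        have : q z < q m := qanti ⟨le_refl m, hmz.le⟩ ⟨hmz.le, le_refl z⟩ hmz
        rw [hqm0] at this
        exact absurd hzT.2 (not_le.2 this)
      -- now q < 0 on (m,a], so deriv q strictly decreasing on [m,a]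
      have q''neg : ∀ t ∈ Set.Ioo m a, deriv (deriv q) t < 0 := by
        intro t ht
        have htI : t ∈ Set.Ioo (-a) a := ⟨hmo.1.trans ht.1, ht.2⟩
        rw [hqeq t htI]
        have hft := hfpos t (hIoo htI)
        exact mul_neg_of_neg_of_pos (hqnegall t ⟨ht.1, ht.2.le⟩) (by positivity)
      have q'anti : StrictAntiOn (deriv q) (Set.Icc m a) :=
        strictAntiOn_of_deriv_neg (convex_Icc _ _) hq'c.continuousOn
          (fun t ht => by rw [interior_Icc] at ht; exact q''neg t ht)
      have := q'anti ⟨le_refl m, hmo.2.le⟩ ⟨hmo.2.le, le_refl a⟩ hmo.2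
      rw [hbq2] at this
      linarith
    · -- case deriv q m = 0 : Gronwall-type argument
      obtain ⟨C, hC⟩ := (isCompact_Icc).exists_bound_of_continuousOn hfc.continuousOn
      have hfsq : ∀ x ∈ Set.Icc (-a) a, f x ^ 2 ≤ C ^ 2 := by
        intro x hx
        have h1 := hC x hx
        rw [Real.norm_eq_abs] at h1
        nlinarith [abs_nonneg (f x), le_abs_self (f x), neg_abs_le (f x)]
      set K : ℝ := 1 + C ^ 2 with hK
      set E : ℝ → ℝ := fun x => q x ^ 2 + deriv q x ^ 2 with hE
      set g : ℝ → ℝ := fun x => E x * Real.exp (-K * x) with hg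
      have hEd : ∀ x : ℝ, HasDerivAt E
          (2 * q x * deriv q x + 2 * deriv q x * deriv (deriv q) x) x := by
        intro x
        have h1 := ((hqd x).hasDerivAt).pow 2
        have h2 := ((hq'd x).hasDerivAt).pow 2
        have := h1.add h2
        refine this.congr_deriv ?_
        push_cast
        ring
      have hexpd : ∀ x : ℝ, HasDerivAt (fun x => Real.exp (-K * x))
          (Real.exp (-K * x) * (-K)) x := by
        intro x
        have h1 : HasDerivAt (fun x : ℝ => -K * x) (-K) x := by
          simpa using (hasDerivAt_id x).const_mul (-K)
        exact h1.exp
      have hgd : ∀ x : ℝ, HasDerivAt g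
          ((2 * q x * deriv q x + 2 * deriv q x * deriv (deriv q) x - K * E x)
            * Real.exp (-K * x)) x := by
        intro x
        have := (hEd x).mul (hexpd x)
        refine this.congr_deriv ?_
        ring
      have hganti : AntitoneOn g (Set.Icc m a) := by
        apply antitoneOn_of_deriv_nonpos (convex_Icc _ _)
        · exact Continuous.continuousOn (by fun_prop)
        · intro x _
          exact (hgd x).differentiableAt.differentiableWithinAt
        · intro x hx
          rw [interior_Icc] at hx
          rw [(hgd x).deriv]
          have hxI : x ∈ Set.Ioo (-a) a := ⟨hmo.1.trans hx.1, hx.2⟩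
          have hq'' := hqeq x hxI
          have hfx := hfsq x (hIoo hxI)
          have hEx : 2 * q x * deriv q x + 2 * deriv q x * deriv (deriv q) x - K * E x ≤ 0 := by
            rw [hq'']
            show 2 * q x * deriv q x + 2 * deriv q x * (q x * f x ^ 2)
              - (1 + C ^ 2) * (q x ^ 2 + deriv q x ^ 2) ≤ 0
            nlinarith [sq_nonneg (q x - deriv q x), sq_nonneg (q x + deriv q x),
              sq_nonneg (f x), mul_nonneg (sq_nonneg (q x - deriv q x)) (sq_nonneg (f x)),
              mul_nonneg (add_nonneg (sq_nonneg (q x)) (sq_nonneg (deriv q x)))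
                (sub_nonneg.2 hfx)]
          have hexp : 0 < Real.exp (-K * x) := Real.exp_pos _
          nlinarith
      have hgm : g m = 0 := by
        show (q m ^ 2 + deriv q m ^ 2) * Real.exp (-K * m) = 0
        rw [hqm0, heq]
        simp
      have hga : 0 < g a := by
        show 0 < (q a ^ 2 + deriv q a ^ 2) * Real.exp (-K * a)
        rw [hbq2]
        positivity
      have := hganti ⟨le_refl m, hmo.2.le⟩ ⟨hmo.2.le, le_refl a⟩ hmo.2.le
      rw [hgm] at this
      linarith
  -- Step B: q strictly increasing on Icc
  have hMono : StrictMonoOn q (Set.Icc (-a) a) :=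
    strictMonoOn_of_deriv_pos (convex_Icc _ _) hqc.continuousOn
      (fun x hx => by rw [interior_Icc] at hx; exact hA x (hIoo hx))
  -- Step C: endpoint signs
  have hqnega : q (-a) < 0 := by
    by_contra h
    push_neg at h
    have hq'' : ∀ x ∈ Set.Ioo (-a) a, 0 < deriv (deriv q) x := by
      intro x hx
      rw [hqeq x hx]
      have hqx : 0 < q x := by
        have := hMono (Set.left_mem_Icc.2 hmem.le) (hIoo hx) hx.1
        linarith
      have hfx := hfpos x (hIoo hx)
      positivity
    have hq'mono : StrictMonoOn (deriv q) (Set.Icc (-a) a) :=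
      strictMonoOn_of_deriv_pos (convex_Icc _ _) hq'c.continuousOn
        (fun x hx => by rw [interior_Icc] at hx; exact hq'' x hx)
    have := hq'mono (Set.left_mem_Icc.2 hmem.le) (Set.right_mem_Icc.2 hmem.le) hmem
    rw [hbq1, hbq2] at this
    linarith
  have hqposa : 0 < q a := by
    by_contra h
    push_neg at h
    have hq'' : ∀ x ∈ Set.Ioo (-a) a, deriv (deriv q) x < 0 := by
      intro x hx
      rw [hqeq x hx]
      have hqx : q x < 0 := by
        have := hMono (hIoo hx) (Set.right_mem_Icc.2 hmem.le) hx.2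
        linarith
      have hfx := hfpos x (hIoo hx)
      exact mul_neg_of_neg_of_pos hqx (by positivity)
    have hq'anti : StrictAntiOn (deriv q) (Set.Icc (-a) a) :=
      strictAntiOn_of_deriv_neg (convex_Icc _ _) hq'c.continuousOn
        (fun x hx => by rw [interior_Icc] at hx; exact hq'' x hx)
    have := hq'anti (Set.left_mem_Icc.2 hmem.le) (Set.right_mem_Icc.2 hmem.le) hmem
    rw [hbq1, hbq2] at this
    linarith
  -- Step D: IVT
  obtain ⟨a₀, ha₀I, ha₀0⟩ := intermediate_value_Ioo hmem.le hqc.continuousOn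
    (Set.mem_Ioo.2 ⟨hqnega, hqposa⟩)
  refine ⟨hMono.mono hIoo, a₀, ⟨ha₀I, ha₀0, ?_, ?_⟩, ?_⟩
  · -- AntitoneOn (deriv q) (Ioo (-a) a₀)
    apply antitoneOn_of_deriv_nonpos (convex_Ioo _ _) hq'c.continuousOn
      hq'd.differentiableOn
    intro x hx
    rw [interior_Ioo] at hx
    have hxI : x ∈ Set.Ioo (-a) a := ⟨hx.1, hx.2.trans ha₀I.2⟩
    rw [hqeq x hxI]
    have hqx : q x < 0 := by
      have := hMono (hIoo hxI) (hIoo ha₀I) hx.2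
      rw [ha₀0] at this
      linarith
    nlinarith [sq_nonneg (f x)]
  · -- MonotoneOn (deriv q) (Ioo a₀ a)
    apply monotoneOn_of_deriv_nonneg (convex_Ioo _ _) hq'c.continuousOn
      hq'd.differentiableOn
    intro x hx
    rw [interior_Ioo] at hx
    have hxI : x ∈ Set.Ioo (-a) a := ⟨ha₀I.1.trans hx.1, hx.2⟩
    rw [hqeq x hxI]
    have hqx : 0 < q x := by
      have := hMono (hIoo ha₀I) (hIoo hxI) hx.1
      rw [ha₀0] at this
      linarith
    positivity
  · rintro b ⟨hbI, hb0, -, -⟩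
    exact hMono.injOn (hIoo hbI) (hIoo ha₀I) (hb0.trans ha₀0.symm)
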